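/- Let p be an odd prime, let i1, i2 be two distinct elements of {1,…,p−1}, let δ ∈ {0,…,p−1}, and let y0, y1, y2 be complex numbers. Then the elementary symmetric polynomial of degree p−1−δ of the p−1 complex numbers (y0 + ζ_p^{i1·j} y1 + ζ_p^{i2·j} y2), j = 1,…,p−1, equals Σ C(n0, δ) · Δ^{i1,i2}(n1,n2,p) · y0^{n0−δ} y1^{n1} y2^{n2}, where the sum runs over all nonnegative integers n0, n1, n2 with n0 + n1 + n2 = p−1 and n0 ≥ δ, and C(n0,δ) is a binomial coefficient. -/

import Mathlib

set_option linter.unusedSectionVars false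


open Finset

/-- `Acount p i1 i2 n1 n2 i` is the number of pairs `(X1, X2)` of disjoint subsets of
the nonzero residues mod `p` with `|X1| = n1`, `|X2| = n2` and
`i1·ΣX1 + i2·ΣX2 = i` in `ℤ/p`. -/
def Acount (p : ℕ) [NeZero p] (i1 i2 n1 n2 : ℕ) (i : ZMod p) : ℕ :=
  (((((Finset.univ.erase (0 : ZMod p)).powersetCard n1) ×ˢ
      ((Finset.univ.erase (0 : ZMod p)).powersetCard n2)).filter
    (fun X => X.1 ∩ X.2 = ∅ ∧
      (i1 : ZMod p) * X.1.sum id + (i2 : ZMod p) * X.2.sum id = i))).card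

/-- `Δ^{i1,i2}(n1,n2,p) = A_0^{i1,i2}(n1,n2,p) - A_1^{i1,i2}(n1,n2,p)`. -/
def Delta (p : ℕ) [NeZero p] (i1 i2 n1 n2 : ℕ) : ℤ :=
  (Acount p i1 i2 n1 n2 0 : ℤ) - (Acount p i1 i2 n1 n2 1 : ℤ)

lemma keyA {M : Type*} [CommRing M] (Ω : Finset ℕ) (N : ℕ) (a : M) (f g : ℕ → M) :
    ∑ S ∈ Ω.powersetCard N, ∏ j ∈ S, (a + f j + g j)
      = ∑ P ∈ (Ω.powerset ×ˢ Ω.powerset).filter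
          (fun P => Disjoint P.1 P.2 ∧ P.1.card + P.2.card ≤ N),
          ((Ω.card - P.1.card - P.2.card).choose (N - P.1.card - P.2.card) : M) *
            a ^ (N - P.1.card - P.2.card) * (∏ j ∈ P.1, f j) * ∏ j ∈ P.2, g j := by
  -- Step 1: expand each product
  have h1 : ∀ S ∈ Ω.powersetCard N,
      ∏ j ∈ S, (a + f j + g j)
        = ∑ X1 ∈ S.powerset, ∑ X2 ∈ (S \ X1).powerset,
            (∏ j ∈ X1, f j) * ((∏ j ∈ X2, g j) * a ^ (((S \ X1) \ X2).card)) := by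
    intro S _
    have : ∏ j ∈ S, (a + f j + g j) = ∏ j ∈ S, (f j + (g j + a)) := by
      apply Finset.prod_congr rfl; intro j _; ring
    rw [this, Finset.prod_add]
    apply Finset.sum_congr rfl
    intro X1 _
    rw [Finset.prod_add, Finset.mul_sum]
    apply Finset.sum_congr rfl
    intro X2 _
    rw [Finset.prod_const]
  rw [Finset.sum_congr rfl h1]
  -- Step 2: rewrite RHS terms as sums over powersetCard
  have h2 : ∀ P ∈ (Ω.powerset ×ˢ Ω.powerset).filter
        (fun P => Disjoint P.1 P.2 ∧ P.1.card + P.2.card ≤ N),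
      ((Ω.card - P.1.card - P.2.card).choose (N - P.1.card - P.2.card) : M) *
          a ^ (N - P.1.card - P.2.card) * (∏ j ∈ P.1, f j) * ∏ j ∈ P.2, g j
        = ∑ S0 ∈ (Ω \ (P.1 ∪ P.2)).powersetCard (N - P.1.card - P.2.card),
            (∏ j ∈ P.1, f j) * ((∏ j ∈ P.2, g j) * a ^ S0.card) := by
    intro P hP
    simp only [Finset.mem_filter, Finset.mem_product, Finset.mem_powerset] at hP
    obtain ⟨⟨hP1, hP2⟩, hdisj, hcard⟩ := hP
    have hsub : P.1 ∪ P.2 ⊆ Ω := Finset.union_subset hP1 hP2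
    have hcardsd : (Ω \ (P.1 ∪ P.2)).card = Ω.card - P.1.card - P.2.card := by
      rw [Finset.card_sdiff_of_subset hsub, Finset.card_union_of_disjoint hdisj]
      omega
    rw [Finset.sum_congr rfl (fun S0 hS0 => by
      rw [(Finset.mem_powersetCard.1 hS0).2])]
    rw [Finset.sum_const, Finset.card_powersetCard, hcardsd]
    push_cast
    ring
  rw [Finset.sum_congr rfl h2]
  -- Step 3: sigma reindexing
  rw [Finset.sum_sigma', Finset.sum_sigma', Finset.sum_sigma']
  refine Finset.sum_nbij'
    (fun x => ⟨(x.1.2, x.2), (x.1.1 \ x.1.2) \ x.2⟩)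
    (fun z => ⟨⟨z.1.1 ∪ z.1.2 ∪ z.2, z.1.1⟩, z.1.2⟩) ?_ ?_ ?_ ?_ ?_
  · rintro ⟨⟨S, X1⟩, X2⟩ hx
    simp only [Finset.mem_sigma, Finset.mem_powersetCard, Finset.mem_powerset,
      Finset.mem_filter, Finset.mem_product] at hx ⊢
    obtain ⟨⟨⟨hSΩ, hScard⟩, hX1⟩, hX2⟩ := hx
    obtain ⟨hX2S, hdisj21⟩ := Finset.subset_sdiff.1 hX2
    have hdisj : Disjoint X1 X2 := hdisj21.symm
    have hUsub : X1 ∪ X2 ⊆ S := Finset.union_subset hX1 hX2S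
    have hsd : (S \ X1) \ X2 = S \ (X1 ∪ X2) := by
      rw [sdiff_sdiff_left, Finset.sup_eq_union]
    have hcardU : (X1 ∪ X2).card = X1.card + X2.card :=
      Finset.card_union_of_disjoint hdisj
    have hle : X1.card + X2.card ≤ N := by
      rw [← hcardU, ← hScard]; exact Finset.card_le_card hUsub
    refine ⟨⟨⟨hX1.trans hSΩ, hX2S.trans hSΩ⟩, hdisj, hle⟩, ?_, ?_⟩
    · rw [hsd]
      exact Finset.sdiff_subset_sdiff hSΩ (le_refl _)
    · rw [hsd, Finset.card_sdiff_of_subset hUsub, hScard, hcardU]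
      omega
  · rintro ⟨⟨X1, X2⟩, S0⟩ hz
    simp only [Finset.mem_sigma, Finset.mem_powersetCard, Finset.mem_powerset,
      Finset.mem_filter, Finset.mem_product] at hz ⊢
    obtain ⟨⟨⟨hX1, hX2⟩, hdisj, hle⟩, hS0, hS0card⟩ := hz
    obtain ⟨hS0Ω, hdisj0⟩ := Finset.subset_sdiff.1 hS0
    refine ⟨⟨⟨Finset.union_subset (Finset.union_subset hX1 hX2) hS0Ω, ?_⟩,
      Finset.subset_union_left.trans Finset.subset_union_left⟩, ?_⟩
    · rw [Finset.card_union_of_disjoint hdisj0.symm,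
        Finset.card_union_of_disjoint hdisj, hS0card]
      omega
    · rw [Finset.subset_sdiff]
      exact ⟨Finset.subset_union_right.trans Finset.subset_union_left, hdisj.symm⟩
  · rintro ⟨⟨S, X1⟩, X2⟩ hx
    simp only [Finset.mem_sigma, Finset.mem_powersetCard, Finset.mem_powerset] at hx
    obtain ⟨⟨⟨hSΩ, hScard⟩, hX1⟩, hX2⟩ := hx
    obtain ⟨hX2S, hdisj21⟩ := Finset.subset_sdiff.1 hX2
    have hUsub : X1 ∪ X2 ⊆ S := Finset.union_subset hX1 hX2S
    have hsd : (S \ X1) \ X2 = S \ (X1 ∪ X2) := by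
      rw [sdiff_sdiff_left, Finset.sup_eq_union]
    have hS : X1 ∪ X2 ∪ ((S \ X1) \ X2) = S := by
      rw [hsd]; exact Finset.union_sdiff_of_subset hUsub
    exact congrArg (fun S' => (⟨⟨S', X1⟩, X2⟩ : Σ _ : (Σ _ : Finset ℕ, Finset ℕ), Finset ℕ)) hS
  · rintro ⟨⟨X1, X2⟩, S0⟩ hz
    simp only [Finset.mem_sigma, Finset.mem_powersetCard, Finset.mem_powerset,
      Finset.mem_filter, Finset.mem_product] at hz
    obtain ⟨⟨⟨hX1, hX2⟩, hdisj, hle⟩, hS0, hS0card⟩ := hz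
    obtain ⟨hS0Ω, hdisj0⟩ := Finset.subset_sdiff.1 hS0
    have h1 : ((X1 ∪ X2 ∪ S0) \ X1) \ X2 = S0 := by
      have hsd : ((X1 ∪ X2 ∪ S0) \ X1) \ X2 = (X1 ∪ X2 ∪ S0) \ (X1 ∪ X2) := by
        rw [sdiff_sdiff_left, Finset.sup_eq_union]
      rw [hsd]
      exact Finset.union_sdiff_cancel_left hdisj0.symm
    exact congrArg (fun S0' => (⟨(X1, X2), S0'⟩ : Σ _ : Finset ℕ × Finset ℕ, Finset ℕ)) h1
  · rintro ⟨⟨S, X1⟩, X2⟩ _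
    rfl

section scaling
variable {p : ℕ} [NeZero p] [Fact (Nat.Prime p)]

lemma himg1 {c : ZMod p} (hc : c ≠ 0) {n : ℕ} {X : Finset (ZMod p)}
    (hX : X ∈ (Finset.univ.erase (0 : ZMod p)).powersetCard n) :
    X.image (fun x => c * x) ∈ (Finset.univ.erase (0 : ZMod p)).powersetCard n := by
  rw [Finset.mem_powersetCard] at hX ⊢
  constructor
  · intro y hy
    rw [Finset.mem_image] at hy
    obtain ⟨x, hx, rfl⟩ := hy
    have hx0 : x ≠ 0 := (Finset.mem_erase.1 (hX.1 hx)).1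
    exact Finset.mem_erase.2 ⟨mul_ne_zero hc hx0, Finset.mem_univ _⟩
  · rw [Finset.card_image_of_injective _ (mul_right_injective₀ hc)]
    exact hX.2

lemma hsum1 {c : ZMod p} (hc : c ≠ 0) (X : Finset (ZMod p)) :
    (X.image (fun x => c * x)).sum id = c * X.sum id := by
  rw [Finset.sum_image (fun x _ y _ h => mul_left_cancel₀ hc h), Finset.mul_sum]
  rfl

lemma himg_img {c : ZMod p} (hc : c ≠ 0) (X : Finset (ZMod p)) :
    (X.image (fun x => c * x)).image (fun x => c⁻¹ * x) = X := by
  rw [Finset.image_image]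
  have : ((fun x => c⁻¹ * x) ∘ (fun x => c * x)) = id := by
    funext x; simp [inv_mul_cancel_left₀ hc]
  rw [this, Finset.image_id]

lemma hdisj_img {c : ZMod p} (hc : c ≠ 0) {X1 X2 : Finset (ZMod p)} (h : X1 ∩ X2 = ∅) :
    (X1.image (fun x => c * x)) ∩ (X2.image (fun x => c * x)) = ∅ := by
  rw [← Finset.image_inter _ _ (mul_right_injective₀ hc), h, Finset.image_empty]

lemma Acount_scale (i1 i2 n1 n2 : ℕ) (c : ZMod p) (hc : c ≠ 0) (i : ZMod p) :
    Acount p i1 i2 n1 n2 i = Acount p i1 i2 n1 n2 (c * i) := by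
  have hc' : c⁻¹ ≠ 0 := inv_ne_zero hc
  unfold Acount
  apply Finset.card_nbij' (fun Q => (Q.1.image (fun x => c * x), Q.2.image (fun x => c * x)))
    (fun Q => (Q.1.image (fun x => c⁻¹ * x), Q.2.image (fun x => c⁻¹ * x)))
  · rintro ⟨X1, X2⟩ hX
    change (X1, X2) ∈ (_ : Finset _) at hX
    simp only [Finset.mem_coe, Finset.mem_filter, Finset.mem_product] at hX ⊢
    obtain ⟨⟨h1, h2⟩, hint, hsum⟩ := hX
    refine ⟨⟨himg1 hc h1, himg1 hc h2⟩, hdisj_img hc hint, ?_⟩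
    rw [hsum1 hc, hsum1 hc]
    rw [← hsum]; ring
  · rintro ⟨X1, X2⟩ hX
    change (X1, X2) ∈ (_ : Finset _) at hX
    simp only [Finset.mem_coe, Finset.mem_filter, Finset.mem_product] at hX ⊢
    obtain ⟨⟨h1, h2⟩, hint, hsum⟩ := hX
    refine ⟨⟨himg1 hc' h1, himg1 hc' h2⟩, hdisj_img hc' hint, ?_⟩
    rw [hsum1 hc', hsum1 hc']
    have : (i1 : ZMod p) * (c⁻¹ * X1.sum id) + (i2 : ZMod p) * (c⁻¹ * X2.sum id)
        = c⁻¹ * ((i1 : ZMod p) * X1.sum id + (i2 : ZMod p) * X2.sum id) := by ring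
    rw [this, hsum, inv_mul_cancel_left₀ hc]
  · rintro ⟨X1, X2⟩ _
    simp only [Prod.mk.injEq]
    exact ⟨himg_img hc X1, himg_img hc X2⟩
  · rintro ⟨X1, X2⟩ _
    simp only [Prod.mk.injEq]
    constructor
    · rw [Finset.image_image]
      have : ((fun x => c * x) ∘ (fun x => c⁻¹ * x)) = id := by
        funext x; simp [mul_inv_cancel_left₀ hc]
      rw [this, Finset.image_id]
    · rw [Finset.image_image]
      have : ((fun x => c * x) ∘ (fun x => c⁻¹ * x)) = id := by
        funext x; simp [mul_inv_cancel_left₀ hc]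
      rw [this, Finset.image_id]

lemma Acount_ne_zero (i1 i2 n1 n2 : ℕ) {i : ZMod p} (hi : i ≠ 0) :
    Acount p i1 i2 n1 n2 i = Acount p i1 i2 n1 n2 1 := by
  have := Acount_scale (p := p) i1 i2 n1 n2 i hi 1
  rw [mul_one] at this
  exact this.symm

lemma Asum (hp1 : 1 < p) (i1 i2 n1 n2 : ℕ) (ζ : ℂ) (hprim : IsPrimitiveRoot ζ p) :
    ∑ i : ZMod p, (Acount p i1 i2 n1 n2 i : ℂ) * ζ ^ (ZMod.val i)
      = (Delta p i1 i2 n1 n2 : ℂ) := by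
  have hzsum : ∑ i : ZMod p, ζ ^ (ZMod.val i) = 0 := by
    have h2 : ∑ i : ZMod p, ζ ^ (ZMod.val i) = ∑ k ∈ Finset.range p, ζ ^ k := by
      apply Finset.sum_nbij' (fun i => ZMod.val i) (fun k => (k : ZMod p))
      · intro i _; exact Finset.mem_range.2 (ZMod.val_lt i)
      · intro k _; exact Finset.mem_univ _
      · intro i _; exact ZMod.natCast_zmod_val i
      · intro k hk; exact ZMod.val_cast_of_lt (Finset.mem_range.1 hk)
      · intro i _; rfl
    rw [h2]
    exact hprim.geom_sum_eq_zero hp1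
  rw [← Finset.add_sum_erase _ _ (Finset.mem_univ (0 : ZMod p))]
  have hcongr : ∀ i ∈ Finset.univ.erase (0 : ZMod p),
      (Acount p i1 i2 n1 n2 i : ℂ) * ζ ^ (ZMod.val i)
        = (Acount p i1 i2 n1 n2 1 : ℂ) * ζ ^ (ZMod.val i) := by
    intro i hi
    rw [Acount_ne_zero i1 i2 n1 n2 (Finset.mem_erase.1 hi).1]
  rw [Finset.sum_congr rfl hcongr, ← Finset.mul_sum,
    Finset.sum_erase_eq_sub (Finset.mem_univ (0 : ZMod p)), hzsum]
  simp only [ZMod.val_zero, pow_zero, mul_one, Delta]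
  push_cast
  ring
end scaling

variable {p : ℕ} [NeZero p]

lemma cast_injOn_Icc (hp1 : 1 < p) : ∀ a ∈ Finset.Icc 1 (p-1), ∀ b ∈ Finset.Icc 1 (p-1),
    (a : ZMod p) = (b : ZMod p) → a = b := by
  intro a ha b hb h
  rw [Finset.mem_Icc] at ha hb
  have ha' : a < p := by omega
  have hb' : b < p := by omega
  have := congrArg ZMod.val h
  rwa [ZMod.val_cast_of_lt ha', ZMod.val_cast_of_lt hb'] at this

lemma img_mem (hp1 : 1 < p) {n : ℕ} {X : Finset ℕ} (hX : X ⊆ Finset.Icc 1 (p-1))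
    (hcard : X.card = n) :
    X.image (fun j : ℕ => (j : ZMod p)) ∈ (Finset.univ.erase (0 : ZMod p)).powersetCard n := by
  rw [Finset.mem_powersetCard]
  constructor
  · intro y hy
    rw [Finset.mem_image] at hy
    obtain ⟨x, hx, rfl⟩ := hy
    have hx' := Finset.mem_Icc.1 (hX hx)
    refine Finset.mem_erase.2 ⟨?_, Finset.mem_univ _⟩
    intro h0
    have := congrArg ZMod.val h0
    rw [ZMod.val_cast_of_lt (by omega : x < p), ZMod.val_zero] at this
    omega
  · rw [Finset.card_image_of_injOn (fun a ha b hb => cast_injOn_Icc hp1 a (hX ha) b (hX hb))]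
    exact hcard

lemma val_img_mem {n : ℕ} {Q : Finset (ZMod p)}
    (hQ : Q ∈ (Finset.univ.erase (0 : ZMod p)).powersetCard n) :
    Q.image ZMod.val ⊆ Finset.Icc 1 (p-1) ∧ (Q.image ZMod.val).card = n := by
  rw [Finset.mem_powersetCard] at hQ
  constructor
  · intro y hy
    rw [Finset.mem_image] at hy
    obtain ⟨x, hx, rfl⟩ := hy
    have hx0 : x ≠ 0 := (Finset.mem_erase.1 (hQ.1 hx)).1
    have h1 : x.val ≠ 0 := fun h => hx0 (by rwa [← ZMod.val_eq_zero])
    have h2 : x.val < p := ZMod.val_lt x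
    rw [Finset.mem_Icc]; omega
  · rw [Finset.card_image_of_injective _ (ZMod.val_injective p)]
    exact hQ.2

lemma charsum [Fact (Nat.Prime p)] (hp1 : 1 < p) (i1 i2 n1 n2 : ℕ) (ζ : ℂ)
    (hprim : IsPrimitiveRoot ζ p) :
    ∑ P ∈ ((Finset.Icc 1 (p-1)).powersetCard n1 ×ˢ
        (Finset.Icc 1 (p-1)).powersetCard n2).filter (fun P => Disjoint P.1 P.2),
      ζ ^ (i1 * ∑ j ∈ P.1, j + i2 * ∑ j ∈ P.2, j) = (Delta p i1 i2 n1 n2 : ℂ) := by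
  have hz : ∀ m : ℕ, ζ ^ m = ζ ^ (ZMod.val (m : ZMod p)) := by
    intro m
    conv_lhs => rw [← Nat.div_add_mod m p]
    rw [pow_add, pow_mul, hprim.pow_eq_one, one_pow, one_mul, ZMod.val_natCast]
  -- group by residue
  rw [← Finset.sum_fiberwise_of_maps_to
    (g := fun P : Finset ℕ × Finset ℕ => ((i1 * ∑ j ∈ P.1, j + i2 * ∑ j ∈ P.2, j : ℕ) : ZMod p))
    (t := Finset.univ) (fun _ _ => Finset.mem_univ _)]
  rw [← Asum hp1 i1 i2 n1 n2 ζ hprim]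
  apply Finset.sum_congr rfl
  intro i _
  have hterm : ∀ P ∈ (((Finset.Icc 1 (p-1)).powersetCard n1 ×ˢ
        (Finset.Icc 1 (p-1)).powersetCard n2).filter (fun P => Disjoint P.1 P.2)).filter
        (fun P => ((i1 * ∑ j ∈ P.1, j + i2 * ∑ j ∈ P.2, j : ℕ) : ZMod p) = i),
      ζ ^ (i1 * ∑ j ∈ P.1, j + i2 * ∑ j ∈ P.2, j) = ζ ^ (ZMod.val i) := by
    intro P hP
    rw [hz]
    rw [Finset.mem_filter] at hP
    rw [hP.2]
  rw [Finset.sum_congr rfl hterm, Finset.sum_const, nsmul_eq_mul]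
  congr 1
  -- cardinality = Acount
  norm_cast
  unfold Acount
  apply Finset.card_nbij'
    (fun P => (P.1.image (fun j : ℕ => (j : ZMod p)), P.2.image (fun j : ℕ => (j : ZMod p))))
    (fun Q => (Q.1.image ZMod.val, Q.2.image ZMod.val))
  · rintro ⟨X1, X2⟩ hX
    change (X1, X2) ∈ (_ : Finset _) at hX
    simp only [Finset.mem_coe, Finset.mem_filter, Finset.mem_product, Finset.mem_powersetCard] at hX ⊢
    obtain ⟨⟨⟨⟨hs1, hc1⟩, hs2, hc2⟩, hdisj⟩, hsum⟩ := hX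
    refine ⟨⟨Finset.mem_powersetCard.1 (img_mem hp1 hs1 hc1), Finset.mem_powersetCard.1 (img_mem hp1 hs2 hc2)⟩, ?_, ?_⟩
    · rw [← Finset.disjoint_iff_inter_eq_empty, Finset.disjoint_left]
      rintro a ha hb
      rw [Finset.mem_image] at ha hb
      obtain ⟨x, hx, rfl⟩ := ha
      obtain ⟨y, hy, hyx⟩ := hb
      have := cast_injOn_Icc hp1 y (hs2 hy) x (hs1 hx) hyx
      subst this
      exact Finset.disjoint_left.1 hdisj hx hy
    · have e1 : (X1.image (fun j : ℕ => (j : ZMod p))).sum id = ((∑ j ∈ X1, j : ℕ) : ZMod p) := by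
        rw [Finset.sum_image (fun a ha b hb => cast_injOn_Icc hp1 a (hs1 ha) b (hs1 hb))]
        push_cast; rfl
      have e2 : (X2.image (fun j : ℕ => (j : ZMod p))).sum id = ((∑ j ∈ X2, j : ℕ) : ZMod p) := by
        rw [Finset.sum_image (fun a ha b hb => cast_injOn_Icc hp1 a (hs2 ha) b (hs2 hb))]
        push_cast; rfl
      rw [e1, e2, ← hsum]
      push_cast; ring
  · rintro ⟨Q1, Q2⟩ hQ
    change (Q1, Q2) ∈ (_ : Finset _) at hQ
    simp only [Finset.mem_coe, Finset.mem_filter, Finset.mem_product, Finset.mem_powersetCard] at hQ ⊢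
    obtain ⟨⟨h1, h2⟩, hint, hsum⟩ := hQ
    obtain ⟨hs1, hc1⟩ := val_img_mem (Finset.mem_powersetCard.2 h1)
    obtain ⟨hs2, hc2⟩ := val_img_mem (Finset.mem_powersetCard.2 h2)
    have e1 : ((∑ j ∈ Q1.image ZMod.val, j : ℕ) : ZMod p) = Q1.sum id := by
      rw [Finset.sum_image (fun a _ b _ h => ZMod.val_injective p h)]
      push_cast
      rw [Finset.sum_congr rfl (fun x _ => ZMod.natCast_zmod_val x)]
      rfl
    have e2 : ((∑ j ∈ Q2.image ZMod.val, j : ℕ) : ZMod p) = Q2.sum id := by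
      rw [Finset.sum_image (fun a _ b _ h => ZMod.val_injective p h)]
      push_cast
      rw [Finset.sum_congr rfl (fun x _ => ZMod.natCast_zmod_val x)]
      rfl
    refine ⟨⟨⟨⟨hs1, hc1⟩, hs2, hc2⟩, ?_⟩, ?_⟩
    · rw [Finset.disjoint_left]
      rintro a ha hb
      rw [Finset.mem_image] at ha hb
      obtain ⟨x, hx, rfl⟩ := ha
      obtain ⟨y, hy, hyx⟩ := hb
      have := ZMod.val_injective p hyx
      subst this
      have : y ∈ Q1 ∩ Q2 := Finset.mem_inter.2 ⟨hx, hy⟩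
      rw [hint] at this
      exact absurd this (Finset.notMem_empty _)
    · rw [Nat.cast_add, Nat.cast_mul, Nat.cast_mul, e1, e2]
      push_cast
      exact hsum
  · rintro ⟨X1, X2⟩ hX
    change (X1, X2) ∈ (_ : Finset _) at hX
    simp only [Finset.mem_filter, Finset.mem_product, Finset.mem_powersetCard] at hX
    obtain ⟨⟨⟨⟨hs1, _⟩, hs2, _⟩, _⟩, _⟩ := hX
    simp only [Prod.mk.injEq]
    constructor
    · rw [Finset.image_image]
      rw [show ((ZMod.val ∘ fun j : ℕ => (j : ZMod p))) = fun j : ℕ => ((j : ZMod p)).val from rfl]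
      rw [Finset.image_congr (g := id) (fun x hx => by
        have := Finset.mem_Icc.1 (hs1 hx)
        simp only [id_eq]
        exact ZMod.val_cast_of_lt (by omega)), Finset.image_id]
    · rw [Finset.image_image]
      rw [show ((ZMod.val ∘ fun j : ℕ => (j : ZMod p))) = fun j : ℕ => ((j : ZMod p)).val from rfl]
      rw [Finset.image_congr (g := id) (fun x hx => by
        have := Finset.mem_Icc.1 (hs2 hx)
        simp only [id_eq]
        exact ZMod.val_cast_of_lt (by omega)), Finset.image_id]
  · rintro ⟨Q1, Q2⟩ _
    simp only [Prod.mk.injEq]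
    constructor
    · rw [Finset.image_image]
      rw [Finset.image_congr (g := id) (fun x _ => by
        simp only [Function.comp_apply, id_eq]
        exact ZMod.natCast_zmod_val x), Finset.image_id]
    · rw [Finset.image_image]
      rw [Finset.image_congr (g := id) (fun x _ => by
        simp only [Function.comp_apply, id_eq]
        exact ZMod.natCast_zmod_val x), Finset.image_id]

/-- Expansion of the elementary symmetric polynomials of the numbers
`y0 + ζ_p^{i1 j} y1 + ζ_p^{i2 j} y2`, `j = 1,…,p-1`, in terms of the coefficients
`Δ^{i1,i2}(n1,n2,p)`. -/
theorem rarefaction_stmt9 (p : ℕ) [NeZero p] (hp : p.Prime) (hodd : Odd p)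
    (i1 i2 : ℕ) (hi1 : 1 ≤ i1 ∧ i1 ≤ p - 1) (hi2 : 1 ≤ i2 ∧ i2 ≤ p - 1) (hne : i1 ≠ i2)
    (δ : ℕ) (hδ : δ ≤ p - 1)
    (ζ : ℂ) (hζ : ζ = Complex.exp (2 * Real.pi * Complex.I / p))
    (y0 y1 y2 : ℂ) :
    ∑ S ∈ (Finset.Icc 1 (p - 1)).powersetCard (p - 1 - δ),
        ∏ j ∈ S, (y0 + ζ ^ (i1 * j) * y1 + ζ ^ (i2 * j) * y2) =
      ∑ n ∈ (Finset.range p ×ˢ Finset.range p).filter (fun n => n.1 + n.2 + δ ≤ p - 1),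
        ((p - 1 - n.1 - n.2).choose δ : ℂ) * (Delta p i1 i2 n.1 n.2 : ℂ) *
          y0 ^ (p - 1 - n.1 - n.2 - δ) * y1 ^ n.1 * y2 ^ n.2 := by
  haveI : Fact p.Prime := ⟨hp⟩
  have hp1 : 1 < p := hp.one_lt
  have hprim : IsPrimitiveRoot ζ p := hζ ▸ Complex.isPrimitiveRoot_exp p (NeZero.ne p)
  set N := p - 1 - δ with hN
  set Ω := Finset.Icc 1 (p - 1) with hΩdef
  have hΩ : Ω.card = p - 1 := by rw [hΩdef, Nat.card_Icc]; omega
  rw [keyA Ω N y0 (fun j => ζ ^ (i1 * j) * y1) (fun j => ζ ^ (i2 * j) * y2)]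
  simp only [hΩ]
  have hmaps : ∀ P ∈ (Ω.powerset ×ˢ Ω.powerset).filter
      (fun P => Disjoint P.1 P.2 ∧ P.1.card + P.2.card ≤ N),
      (P.1.card, P.2.card) ∈ (Finset.range p ×ˢ Finset.range p).filter
        (fun n => n.1 + n.2 + δ ≤ p - 1) := by
    intro P hP
    simp only [Finset.mem_filter, Finset.mem_product, Finset.mem_powerset,
      Finset.mem_range] at hP ⊢
    obtain ⟨⟨h1, h2⟩, _, hle⟩ := hP
    have c1 := Finset.card_le_card h1
    have c2 := Finset.card_le_card h2
    rw [hΩ] at c1 c2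
    omega
  rw [← Finset.sum_fiberwise_of_maps_to hmaps]
  apply Finset.sum_congr rfl
  rintro ⟨n1, n2⟩ hn
  simp only [Finset.mem_filter, Finset.mem_product, Finset.mem_range] at hn
  obtain ⟨⟨hn1, hn2⟩, hle⟩ := hn
  have hsetEq : ((Ω.powerset ×ˢ Ω.powerset).filter
        (fun P => Disjoint P.1 P.2 ∧ P.1.card + P.2.card ≤ N)).filter
        (fun P => (P.1.card, P.2.card) = (n1, n2))
      = (Ω.powersetCard n1 ×ˢ Ω.powersetCard n2).filter (fun P => Disjoint P.1 P.2) := by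
    ext P
    simp only [Finset.mem_filter, Finset.mem_product, Finset.mem_powerset,
      Finset.mem_powersetCard, Prod.mk.injEq]
    constructor
    · rintro ⟨⟨⟨h1, h2⟩, hd, _⟩, e1, e2⟩
      exact ⟨⟨⟨h1, e1⟩, h2, e2⟩, hd⟩
    · rintro ⟨⟨⟨h1, e1⟩, h2, e2⟩, hd⟩
      exact ⟨⟨⟨h1, h2⟩, hd, by omega⟩, e1, e2⟩
  rw [hsetEq]
  have hterm : ∀ P ∈ (Ω.powersetCard n1 ×ˢ Ω.powersetCard n2).filter
      (fun P => Disjoint P.1 P.2),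
      (((p - 1 - P.1.card - P.2.card).choose (N - P.1.card - P.2.card) : ℂ) *
          y0 ^ (N - P.1.card - P.2.card) * ∏ j ∈ P.1, ζ ^ (i1 * j) * y1) *
          ∏ j ∈ P.2, ζ ^ (i2 * j) * y2
        = (((p - 1 - n1 - n2).choose δ : ℂ) * y0 ^ (p - 1 - n1 - n2 - δ) *
            y1 ^ n1 * y2 ^ n2) * ζ ^ (i1 * ∑ j ∈ P.1, j + i2 * ∑ j ∈ P.2, j) := by
    rintro ⟨X1, X2⟩ hP
    simp only [Finset.mem_filter, Finset.mem_product, Finset.mem_powersetCard] at hP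
    obtain ⟨⟨⟨_, e1⟩, _, e2⟩, _⟩ := hP
    simp only [e1, e2]
    have hch : (p - 1 - n1 - n2).choose (N - n1 - n2) = (p - 1 - n1 - n2).choose δ := by
      have h1 : N - n1 - n2 = (p - 1 - n1 - n2) - δ := by omega
      rw [h1, Nat.choose_symm (by omega)]
    have hexp : N - n1 - n2 = p - 1 - n1 - n2 - δ := by omega
    rw [hch, hexp, Finset.prod_mul_distrib, Finset.prod_mul_distrib,
      Finset.prod_const, Finset.prod_const, e1, e2,
      Finset.prod_pow_eq_pow_sum, Finset.prod_pow_eq_pow_sum,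
      ← Finset.mul_sum, ← Finset.mul_sum, pow_add]
    ring
  rw [Finset.sum_congr rfl hterm, ← Finset.mul_sum,
    charsum hp1 i1 i2 n1 n2 ζ hprim]
  ring
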